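/- On each coordinate chart 𝒰_j with holomorphic coordinates (ζ_j^1, …, ζ_j^m, t^1, …, t^s) and differentiable coordinates (z_j^1, …, z_j^m, t^1, …, t^s), one has the identity ∂̄_{𝒳/B}( Σ_α d_u(ζ_j^α(z_j, t)) ∂/∂ζ_j^α ) = ρ d_u(φ(t)), where φ(t) = Σ_{α,λ} A_{jα}^λ ∂̄ζ_j^α(z_j,t) ∂/∂z_j^λ with A_{jα}^λ = ((∂ζ_j^α/∂z_j^λ))^{-1} is the local expression of the Beltrami differential. -/

import Mathlib

/-!
STATEMENT 13 (the identity (3.2) in the proof of Theorem 3.3).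

Setting: on a chart `𝒰_j` of the deformation `π : 𝒳 → B` with holomorphic
coordinates `(ζ_j^1, …, ζ_j^m, t^1, …, t^s)` and differentiable coordinates
`(z_j^1, …, z_j^m, t^1, …, t^s)`, the Beltrami differential has the local expression
`φ(t) = Σ_{α,λ} A_{jα}^λ ∂̄ζ_j^α(z_j, t) ∂/∂z_j^λ` with
`A = ((∂ζ_j^α/∂z_j^λ))⁻¹`; the Rao–Wan map `ρ` transforms the frame `∂/∂z_j^λ` into
`Σ_μ (∂ζ_j^μ/∂z_j^λ) ∂/∂ζ_j^μ`, and the relative Dolbeault operator is locally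
`∂̄_{𝒳/B} = ∂̄ − Σ_{λ,β} A_{jβ}^λ ∂̄ζ_j^β ∂/∂z_j^λ` on coefficient functions.

We model: `R` the ring of `C^{ω∞}`-functions on the chart, `Ω` the `R`-module of
`(0,1)`-forms, `dbar = ∂̄` (the fibrewise Dolbeault operator), `du = d_u` (on
functions) and `duΩ = d_u` (on forms), `Dz λ = ∂/∂z_j^λ`, `ζ α = ζ_j^α(z_j, t)`, and
`A` the inverse matrix of the Jacobian `J = (∂ζ_j^α/∂z_j^λ)`.  Vector-valued forms
are recorded by their coefficients in the frames `∂/∂ζ_j^μ` resp. `∂/∂z_j^λ`.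

Conclusion: the coefficient of `∂/∂ζ_j^μ` in
`∂̄_{𝒳/B}(Σ_α d_u(ζ_j^α) ∂/∂ζ_j^α)`, namely
`∂̄(d_u ζ^μ) − Σ_{λ,β} A_β^λ (∂ d_u ζ^μ/∂z^λ) ∂̄ζ^β`,
equals the coefficient of `∂/∂ζ_j^μ` in `ρ d_u(φ(t))`, namely
`Σ_λ (∂ζ^μ/∂z^λ) d_u(Σ_α A_α^λ ∂̄ζ^α)`.
-/

theorem statement_13
    (m : ℕ)
    -- the ring of C^{ω∞}-functions on the chart 𝒰_j
    (R : Type*) [CommRing R]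
    -- the R-module of (0,1)-forms on the chart
    (Ω : Type*) [AddCommGroup Ω] [Module R Ω]
    -- the fibrewise Dolbeault operator ∂̄ on functions
    (dbar : R →+ Ω)
    (hdbar_der : ∀ f g : R, dbar (f * g) = f • dbar g + g • dbar f)
    -- differentiation d_u along u, on functions and on (0,1)-forms
    (du : R →+ R) (duΩ : Ω →+ Ω)
    (hdu_der : ∀ f g : R, du (f * g) = f * du g + g * du f)
    (hduΩ_der : ∀ (f : R) (w : Ω), duΩ (f • w) = du f • w + f • duΩ w)
    (hdu_dbar : ∀ f : R, duΩ (dbar f) = dbar (du f))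
    -- the coordinate vector fields ∂/∂z_j^λ
    (Dz : Fin m → R →+ R)
    (hDz_der : ∀ (lam : Fin m) (f g : R), Dz lam (f * g) = f * Dz lam g + g * Dz lam f)
    (hDz_du : ∀ (lam : Fin m) (f : R), Dz lam (du f) = du (Dz lam f))
    -- the holomorphic coordinates ζ_j^α, as functions ζ_j^α(z_j, t)
    (ζ : Fin m → R)
    -- A_{jα}^λ = ((∂ζ_j^α/∂z_j^λ))⁻¹ : the inverse of the Jacobian matrix
    (A : Matrix (Fin m) (Fin m) R)
    (hA : A * Matrix.of (fun alpha lam => Dz lam (ζ alpha)) = 1)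
    (hA' : Matrix.of (fun alpha lam => Dz lam (ζ alpha)) * A = 1) :
    -- ∂̄_{𝒳/B}(Σ_α d_u(ζ_j^α) ∂/∂ζ_j^α) = ρ d_u(φ(t)), coefficientwise in the
    -- frame {∂/∂ζ_j^μ}
    ∀ mu : Fin m,
      dbar (du (ζ mu)) -
          ∑ lam : Fin m, ∑ beta : Fin m,
            (A lam beta * Dz lam (du (ζ mu))) • dbar (ζ beta) =
        ∑ lam : Fin m,
          (Dz lam (ζ mu)) • duΩ (∑ alpha : Fin m, A lam alpha • dbar (ζ alpha)) := by
  intro mu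
  classical
  have hdu1 : du (1 : R) = 0 := by
    have h := hdu_der 1 1
    simp only [one_mul, mul_one] at h
    have h' : du (1 : R) = du 1 + du 1 := by simpa using h
    exact left_eq_add.mp h' 
  have hJA : ∀ mu beta : Fin m,
      (∑ lam : Fin m, Dz lam (ζ mu) * A lam beta) = if mu = beta then 1 else 0 := by
    intro mu beta
    have := congrArg (fun M : Matrix (Fin m) (Fin m) R => M mu beta) hA'
    simpa [Matrix.mul_apply, Matrix.one_apply] using this
  have key : ∀ beta : Fin m,
      (∑ lam : Fin m, Dz lam (ζ mu) * du (A lam beta))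
        = - ∑ lam : Fin m, A lam beta * Dz lam (du (ζ mu)) := by
    intro beta
    have h2 := congrArg du (hJA mu beta)
    rw [map_sum] at h2
    have h3 : ∑ lam : Fin m, du (Dz lam (ζ mu) * A lam beta)
        = ∑ lam : Fin m, (Dz lam (ζ mu) * du (A lam beta)
            + A lam beta * Dz lam (du (ζ mu))) := by
      refine Finset.sum_congr rfl fun lam _ => ?_
      rw [hdu_der, hDz_du]
    have h4 : du (if mu = beta then (1:R) else 0) = 0 := by
      split <;> simp [hdu1]
    rw [h3, h4, Finset.sum_add_distrib] at h2
    exact eq_neg_of_add_eq_zero_left h2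
  calc
    dbar (du (ζ mu)) -
        ∑ lam : Fin m, ∑ beta : Fin m,
          (A lam beta * Dz lam (du (ζ mu))) • dbar (ζ beta)
      = (∑ beta : Fin m,
            (∑ lam : Fin m, Dz lam (ζ mu) * du (A lam beta)) • dbar (ζ beta))
        + ∑ beta : Fin m,
            (∑ lam : Fin m, Dz lam (ζ mu) * A lam beta) • dbar (du (ζ beta)) := by
        have swap1 : (∑ lam : Fin m, ∑ beta : Fin m,
            (A lam beta * Dz lam (du (ζ mu))) • dbar (ζ beta))
            = ∑ beta : Fin m, ∑ lam : Fin m,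
            (A lam beta * Dz lam (du (ζ mu))) • dbar (ζ beta) := Finset.sum_comm
        rw [swap1]
        have h5 : ∀ beta : Fin m,
            (∑ lam : Fin m, Dz lam (ζ mu) * du (A lam beta)) • dbar (ζ beta)
              = - ∑ lam : Fin m, (A lam beta * Dz lam (du (ζ mu))) • dbar (ζ beta) := by
          intro beta
          rw [key beta, neg_smul, ← Finset.sum_smul]
        have h6 : ∀ beta : Fin m,
            (∑ lam : Fin m, Dz lam (ζ mu) * A lam beta) • dbar (du (ζ beta))
              = if mu = beta then dbar (du (ζ beta)) else 0 := by
          intro beta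
          rw [hJA mu beta]
          split <;> simp
        simp only [h5, h6, Finset.sum_ite_eq, Finset.mem_univ, if_true]
        simp only [Finset.sum_neg_distrib]
        abel
    _ = ∑ lam : Fin m, ∑ beta : Fin m,
          ((Dz lam (ζ mu) * du (A lam beta)) • dbar (ζ beta)
            + (Dz lam (ζ mu) * A lam beta) • dbar (du (ζ beta))) := by
        simp only [Finset.sum_add_distrib]
        congr 1
        · simp only [Finset.sum_smul]
          exact Finset.sum_comm
        · simp only [Finset.sum_smul]
          exact Finset.sum_comm
    _ = ∑ lam : Fin m,
          (Dz lam (ζ mu)) • duΩ (∑ alpha : Fin m, A lam alpha • dbar (ζ alpha)) := by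
        refine Finset.sum_congr rfl fun lam _ => ?_
        rw [map_sum, Finset.smul_sum]
        refine Finset.sum_congr rfl fun alpha _ => ?_
        rw [hduΩ_der, hdu_dbar, smul_add, mul_smul, mul_smul]
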